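/- (Linking preserves the motivic generating series.) Let C ∈ Mat_{N×N}(ℤ) be symmetric and let a ≠ b be two indices in {1,…,N}. Define the symmetric matrix C' ∈ Mat_{(N+1)×(N+1)}(ℤ), with new index n = N+1, by: C'_{ab} = C'_{ba} = C_{ab} + 1; C'_{nn} = C_{aa} + 2C_{ab} + C_{bb}; C'_{in} = C'_{ni} = C_{ai} + C_{bi} for i ≤ N; and C'_{ij} = C_{ij} for all other i,j ≤ N. Then for every d ∈ ℕ^N: (−q)^{dᵀCd}/∏_{i=1}^{N}(q²;q²)_{d_i} = Σ over all e ∈ ℕ^{N+1} satisfying e_i + (δ_{ia}+δ_{ib})·e_n = d_i for every i ≤ N, of (−q)^{eᵀC'e}/∏_{i=1}^{N+1}(q²;q²)_{e_i} (a finite sum). Equivalently, P_C(x_1,…,x_N) = P_{C'}(x_1,…,x_N,x_n) after the substitution x_n = x_a x_b. -/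

import Mathlib

noncomputable section

/-- The base field `K = ℚ(q)`. -/
abbrev K : Type := RatFunc ℚ

/-- The variable `q` of `K = ℚ(q)`. -/
def qq : K := RatFunc.X

/-- The finite q-Pochhammer symbol `(α; q²)_n = ∏_{k=0}^{n-1} (1 - α q^{2k})`. -/
def qPoch (α : K) (n : ℕ) : K := ∏ k ∈ Finset.range n, (1 - α * qq ^ (2 * k))

/-- The quadratic form `dᵀ C d` of an integer matrix on a dimension vector. -/
def quadForm {N : ℕ} (C : Matrix (Fin N) (Fin N) ℤ) (d : Fin N → ℕ) : ℤ :=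
  ∑ i, ∑ j, C i j * (d i : ℤ) * (d j : ℤ)

/-- The coefficient of `x^d` in the motivic generating series of the extended
symmetric quiver with adjacency matrix `C`: `(-q)^{dᵀCd} / ∏ᵢ (q²;q²)_{dᵢ}`. -/
def Pcoeff {N : ℕ} (C : Matrix (Fin N) (Fin N) ℤ) (d : Fin N → ℕ) : K :=
  (-qq) ^ quadForm C d / ∏ i, qPoch (qq ^ 2) (d i)

def AA (n : ℕ) : K := qPoch (qq ^ 2) n

lemma AA_zero : AA 0 = 1 := by simp [AA, qPoch]

lemma AA_succ (n : ℕ) : AA (n + 1) = AA n * (1 - (qq ^ 2) ^ (n + 1)) := by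
  rw [AA, AA, qPoch, qPoch, Finset.prod_range_succ]
  rw [← pow_mul]
  congr 2
  rw [← pow_add]
  ring_nf

lemma one_sub_xpow_ne (k : ℕ) : (1 : K) - (qq ^ 2) ^ (k + 1) ≠ 0 := by
  have : (qq ^ 2) ^ (k+1) = RatFunc.X ^ (2*(k+1)) := by rw [qq, ← pow_mul]
  rw [this, sub_ne_zero]
  intro h
  have h2 : ((Polynomial.X : Polynomial ℚ) ^ (2*(k+1)) : Polynomial ℚ) = 1 := by
    apply RatFunc.algebraMap_injective (K := ℚ)
    simpa [RatFunc.algebraMap_X] using h.symm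
  have := congrArg Polynomial.natDegree h2
  simp [Polynomial.natDegree_X_pow] at this

lemma AA_ne (n : ℕ) : AA n ≠ 0 := by
  induction n with
  | zero => simp [AA_zero]
  | succ n ih => rw [AA_succ]; exact mul_ne_zero ih (one_sub_xpow_ne n)

/-- Gaussian binomial with base `q²`, valued in `K`. -/
def qb (n m : ℕ) : K := if m ≤ n then AA n / (AA (n - m) * AA m) else 0

lemma qb_zero (n : ℕ) : qb n 0 = 1 := by
  simp [qb, AA_zero, div_self (AA_ne n)]

lemma qb_of_gt {n m : ℕ} (h : n < m) : qb n m = 0 := by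
  simp [qb, not_le.mpr h]

lemma qb_absorb (s k : ℕ) :
    qb s (k + 1) * AA (k + 1) = qb s k * AA k * (1 - (qq ^ 2) ^ (s - k)) := by
  rcases lt_or_ge k s with h | h
  · have hk1 : k + 1 ≤ s := h
    have hks : s - k = (s - (k+1)) + 1 := by omega
    have hAsk : AA (s - k) = AA (s - (k+1)) * (1 - (qq ^ 2) ^ (s - k)) := by
      rw [hks, AA_succ, ← hks]
    have n1 := AA_ne (s - (k+1))
    have n2 := AA_ne (k+1)
    have n3 := AA_ne k
    have n4 : (1:K) - (qq ^ 2) ^ (s - k) ≠ 0 := by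
      rw [hks]; exact one_sub_xpow_ne _
    rw [qb, qb, if_pos hk1, if_pos h.le, hAsk]
    field_simp
  · have h1 : s < k + 1 := by omega
    have h2 : s - k = 0 := by omega
    rw [qb_of_gt h1, h2]
    simp

lemma qb_pascal (r m : ℕ) (hm : m ≤ r) :
    qb (r + 1) (m + 1) = qb r (m + 1) + (qq ^ 2) ^ (r - m) * qb r m := by
  rcases eq_or_lt_of_le hm with h | h
  · subst h
    rw [qb_of_gt (Nat.lt_succ_self m)]
    have h1 : qb (m+1) (m+1) = 1 := by
      simp [qb, AA_zero, div_self (AA_ne (m+1))]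
    have h2 : qb m m = 1 := by
      simp [qb, AA_zero, div_self (AA_ne m)]
    simp [h1, h2]
  · have hm1 : m + 1 ≤ r := h
    have e1 : r + 1 - (m + 1) = r - m := by omega
    have e2 : r - (m+1) + 1 = r - m := by omega
    have hA1 : AA (r + 1) = AA r * (1 - (qq ^ 2) ^ (r + 1)) := AA_succ r
    have hA2 : AA (r - m) = AA (r - (m+1)) * (1 - (qq ^ 2) ^ (r - m)) := by
      rw [← e2, AA_succ, e2]
    have hA3 : AA (m + 1) = AA m * (1 - (qq ^ 2) ^ (m + 1)) := AA_succ m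
    have hx : (qq ^ 2) ^ (r - m) * (qq ^ 2) ^ (m + 1) = (qq ^ 2) ^ (r + 1) := by
      rw [← pow_add]; congr 1; omega
    have n1 := AA_ne r
    have n2 := AA_ne (r - (m+1))
    have n3 := AA_ne m
    have n4 := one_sub_xpow_ne m
    have n6 : (1 : K) - (qq ^ 2) ^ (r - m) ≠ 0 := by
      rw [← e2]; exact one_sub_xpow_ne _
    have n7 := AA_ne (m+1)
    have t1 : qb (r+1) (m+1) = AA r * (1 - (qq^2)^(r+1)) / (AA (r-m) * AA (m+1)) := by
      rw [qb, if_pos (by omega : m + 1 ≤ r + 1), e1, hA1]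
    have t2 : qb r (m+1) = AA r * (1 - (qq^2)^(r-m)) / (AA (r-m) * AA (m+1)) := by
      rw [qb, if_pos hm1, hA2]
      field_simp
    have t3 : (qq^2)^(r-m) * qb r m
        = AA r * ((qq^2)^(r-m) * (1 - (qq^2)^(m+1))) / (AA (r-m) * AA (m+1)) := by
      rw [qb, if_pos hm, hA3]
      rw [show AA r * ((qq^2)^(r-m) * (1 - (qq ^ 2) ^ (m + 1)))
            = (AA r * (qq^2)^(r-m)) * (1 - (qq ^ 2) ^ (m + 1)) by ring,
          show AA (r-m) * (AA m * (1 - (qq ^ 2) ^ (m + 1)))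
            = (AA (r-m) * AA m) * (1 - (qq ^ 2) ^ (m + 1)) by ring,
          mul_div_mul_right _ _ n4]
      rw [mul_div_assoc']
      ring_nf
    rw [t1, t2, t3, ← add_div]
    congr 1
    linear_combination (AA r) * hx

/-- summand in binomial form -/
def Gt (r s k : ℕ) : K := (qq ^ 2) ^ ((r - k) * (s - k)) * (qb r k * qb s k * AA k)
def Ct (r s k : ℕ) : K := (qq ^ 2) ^ ((r + 1 - k) * (s - k)) * (qb r k * qb s k * AA k)

lemma Ct_top (r s : ℕ) : Ct r s (r + 1) = 0 := by
  simp [Ct, qb_of_gt (Nat.lt_succ_self r)]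

lemma Gt_top (r s : ℕ) : Gt r s (r + 1) = 0 := by
  simp [Gt, qb_of_gt (Nat.lt_succ_self r)]

lemma G_succ_zero (r s : ℕ) : Gt (r + 1) s 0 = Ct r s 0 := by
  simp [Gt, Ct, qb_zero]

lemma step_term (r s k : ℕ) (hk : k ≤ r) :
    Gt (r + 1) s (k + 1) = Ct r s (k + 1) + (Gt r s k - Ct r s k) := by
  have habs := qb_absorb s k
  have hp := qb_pascal r k hk
  unfold Gt Ct
  rw [hp]
  have er : r + 1 - (k + 1) = r - k := by omega
  rw [er]
  rcases lt_or_ge k s with h | h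
  · have E1 : (r - k) * (s - k) = (r - k) * (s - (k + 1)) + (r - k) := by
      have h1 : s - (k + 1) + 1 = s - k := by omega
      calc (r - k) * (s - k) = (r - k) * (s - (k + 1) + 1) := by rw [h1]
        _ = (r - k) * (s - (k + 1)) + (r - k) := by ring
    have E2 : (r + 1 - k) * (s - k) = (r - k) * (s - (k + 1)) + (r - k) + (s - k) := by
      have h1 : r + 1 - k = (r - k) + 1 := by omega
      rw [h1]
      calc ((r - k) + 1) * (s - k) = (r - k) * (s - k) + (s - k) := by ring
        _ = (r - k) * (s - (k + 1)) + (r - k) + (s - k) := by rw [E1]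
    rw [E1, E2, pow_add, pow_add, pow_add]
    linear_combination ((qq ^ 2) ^ ((r - k) * (s - (k + 1))) * (qq ^ 2) ^ (r - k) * qb r k) * habs
  · have hs0 : s - k = 0 := by omega
    have hs1 : s - (k + 1) = 0 := by omega
    rw [hs0, hs1, qb_of_gt (show s < k + 1 by omega)]
    simp

lemma Gt_eq_zero_of_min_lt (r s m : ℕ) (h : min r s < m) : Gt r s m = 0 := by
  rcases Nat.lt_or_ge r m with h' | h'
  · simp [Gt, qb_of_gt h']
  · have hs : s < m := by omega
    simp [Gt, qb_of_gt hs]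

lemma sum_ext (r s n : ℕ) (h : min r s + 1 ≤ n) :
    ∑ m ∈ Finset.range n, Gt r s m = ∑ m ∈ Finset.range (min r s + 1), Gt r s m := by
  symm
  apply Finset.sum_subset (Finset.range_subset_range.mpr h)
  intro m _ hm
  apply Gt_eq_zero_of_min_lt
  simp only [Finset.mem_range] at hm
  omega

lemma key (r s : ℕ) : ∑ m ∈ Finset.range (min r s + 1), Gt r s m = 1 := by
  induction r with
  | zero =>
    have : min 0 s = 0 := Nat.zero_min s
    rw [this]
    simp [Gt, qb_zero, AA_zero]
  | succ r ih =>
    rw [← sum_ext (r + 1) s (r + 2) (by omega)]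
    rw [Finset.sum_range_succ' (fun m => Gt (r + 1) s m) (r + 1)]
    rw [G_succ_zero]
    rw [Finset.sum_congr rfl (fun k hk => step_term r s k (by
      simp only [Finset.mem_range] at hk; omega))]
    rw [Finset.sum_add_distrib]
    have hsum := Finset.sum_range_succ' (fun m => Ct r s m) (r + 1)
    have hsum2 := Finset.sum_range_succ (fun m => Ct r s m) (r + 1)
    have htop := Ct_top r s
    have hG : ∑ k ∈ Finset.range (r + 1), Gt r s k = 1 := by
      rw [sum_ext r s (r + 1) (by omega)]; exact ih
    rw [Finset.sum_sub_distrib]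
    linear_combination hG - hsum + hsum2 + htop

def dD {N : ℕ} (a b i : Fin N) : ℤ := (if i = a then 1 else 0) + (if i = b then 1 else 0)

section quad
variable {N : ℕ} (a b : Fin N)

lemma sum_dZ (f : Fin N → ℤ) :
    ∑ i, dD a b i * f i = f a + f b := by
  simp only [dD]
  simp only [add_mul, ite_mul, one_mul, zero_mul, Finset.sum_add_distrib]
  rw [Finset.sum_ite_eq' Finset.univ a f, Finset.sum_ite_eq' Finset.univ b f]
  simp

lemma sum_pair (f g : Fin N → ℤ) :
    ∑ i, ∑ j, (if i = a ∧ j = b then (1:ℤ) else 0) * f i * g j = f a * g b := by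
  have h1 : ∀ i, ∑ j, (if i = a ∧ j = b then (1:ℤ) else 0) * f i * g j
      = (if i = a then f i * g b else 0) := by
    intro i
    by_cases hia : i = a
    · rw [if_pos hia]
      rw [Finset.sum_congr rfl (fun j _ => show (if i = a ∧ j = b then (1:ℤ) else 0) * f i * g j
          = (if j = b then f i * g j else 0) by
            subst hia; by_cases hj : j = b <;> simp [hj])]
      rw [Finset.sum_ite_eq' Finset.univ b (fun j => f i * g j)]
      simp [hia]
    · simp [hia]
  rw [Finset.sum_congr rfl fun i _ => h1 i, Finset.sum_ite_eq' Finset.univ a _]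
  simp


lemma dD_a (hab : a ≠ b) : dD a b a = 1 := by simp [dD, hab]
lemma dD_b (hab : a ≠ b) : dD a b b = 1 := by simp [dD, hab.symm]

lemma expand_CC (C : Matrix (Fin N) (Fin N) ℤ) (hC : C.IsSymm) (u : Fin N → ℤ) (m : ℤ) :
    ∑ i, ∑ j, C i j * (u i - dD a b i * m) * (u j - dD a b j * m)
    = (∑ i, ∑ j, C i j * u i * u j)
      - 2 * m * (∑ j, (C a j + C b j) * u j)
      + m ^ 2 * (C a a + 2 * C a b + C b b) := by
  have hCs : ∀ i j, C j i = C i j := fun i j => congrFun (congrFun hC i) j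
  have inner : ∀ i, ∑ j, C i j * (u i - dD a b i * m) * (u j - dD a b j * m)
      = (u i - dD a b i * m) * ((∑ j, C i j * u j) - m * (C i a + C i b)) := by
    intro i
    rw [Finset.sum_congr rfl (fun j _ => show C i j * (u i - dD a b i * m) * (u j - dD a b j * m)
        = (u i - dD a b i * m) * (C i j * u j)
          - (u i - dD a b i * m) * m * (dD a b j * C i j) by ring)]
    rw [Finset.sum_sub_distrib, ← Finset.mul_sum, ← Finset.mul_sum,
      sum_dZ a b (fun j => C i j)]
    ring
  rw [Finset.sum_congr rfl fun i _ => inner i]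
  rw [Finset.sum_congr rfl (fun i _ => show
      (u i - dD a b i * m) * ((∑ j, C i j * u j) - m * (C i a + C i b))
      = (u i * ∑ j, C i j * u j) - m * ((C i a + C i b) * u i)
        - m * (dD a b i * ((∑ j, C i j * u j) - m * (C i a + C i b))) by ring)]
  rw [Finset.sum_sub_distrib, Finset.sum_sub_distrib, ← Finset.mul_sum, ← Finset.mul_sum,
    sum_dZ a b (fun i => (∑ j, C i j * u j) - m * (C i a + C i b))]
  have h1 : ∑ i, (u i * ∑ j, C i j * u j) = ∑ i, ∑ j, C i j * u i * u j := by
    refine Finset.sum_congr rfl fun i _ => ?_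
    rw [Finset.mul_sum]
    exact Finset.sum_congr rfl fun j _ => by ring
  have h2 : ∑ i, (C i a + C i b) * u i = ∑ j, (C a j + C b j) * u j := by
    refine Finset.sum_congr rfl fun i _ => by rw [hCs a i, hCs b i]
  have h3 : (∑ j, C a j * u j) + (∑ j, C b j * u j) = ∑ j, (C a j + C b j) * u j := by
    rw [← Finset.sum_add_distrib]
    exact Finset.sum_congr rfl fun j _ => by ring
  rw [h1, h2]
  linear_combination (-m) * h3 + m ^ 2 * (hCs a b)

lemma expand_lin (C : Matrix (Fin N) (Fin N) ℤ) (hC : C.IsSymm) (u : Fin N → ℤ) (m : ℤ) :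
    ∑ i, (C a i + C b i) * (u i - dD a b i * m)
    = (∑ j, (C a j + C b j) * u j) - m * (C a a + 2 * C a b + C b b) := by
  have hCs : ∀ i j, C j i = C i j := fun i j => congrFun (congrFun hC i) j
  rw [Finset.sum_congr rfl (fun i _ => show (C a i + C b i) * (u i - dD a b i * m)
      = (C a i + C b i) * u i - m * (dD a b i * (C a i + C b i)) by ring)]
  rw [Finset.sum_sub_distrib, ← Finset.mul_sum, sum_dZ a b (fun i => C a i + C b i)]
  linear_combination m * (hCs b a)

lemma sum_pair' (c1 c2 : Fin N) (d : Fin N → ℕ) (m : ℤ) :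
    ∑ i, ∑ j, (if i = c1 ∧ j = c2 then (1:ℤ) else 0) * ((d i : ℤ) - dD a b i * m)
        * ((d j : ℤ) - dD a b j * m)
      = ((d c1 : ℤ) - dD a b c1 * m) * ((d c2 : ℤ) - dD a b c2 * m) :=
  sum_pair c1 c2 (fun i => (d i : ℤ) - dD a b i * m) (fun j => (d j : ℤ) - dD a b j * m)

lemma expand_CC' (C : Matrix (Fin N) (Fin N) ℤ) (hC : C.IsSymm) (d : Fin N → ℕ) (m : ℤ) :
    ∑ i, ∑ j, C i j * ((d i : ℤ) - dD a b i * m) * ((d j : ℤ) - dD a b j * m)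
    = (∑ i, ∑ j, C i j * (d i : ℤ) * (d j : ℤ))
      - 2 * m * (∑ j, (C a j + C b j) * (d j : ℤ))
      + m ^ 2 * (C a a + 2 * C a b + C b b) :=
  expand_CC a b C hC (fun i => (d i : ℤ)) m

lemma expand_lin' (C : Matrix (Fin N) (Fin N) ℤ) (hC : C.IsSymm) (d : Fin N → ℕ) (m : ℤ) :
    ∑ i, (C a i + C b i) * ((d i : ℤ) - dD a b i * m)
    = (∑ j, (C a j + C b j) * (d j : ℤ)) - m * (C a a + 2 * C a b + C b b) :=
  expand_lin a b C hC (fun i => (d i : ℤ)) m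

end quad

def EE {N : ℕ} (a b : Fin N) (d : Fin N → ℕ) (m : ℕ) : Fin (N + 1) → ℕ :=
  Fin.lastCases m (fun i => d i - ((if i = a then 1 else 0) + (if i = b then 1 else 0)) * m)

lemma EE_castSucc {N : ℕ} (a b : Fin N) (d : Fin N → ℕ) (m : ℕ) (i : Fin N) :
    EE a b d m i.castSucc = d i - ((if i = a then 1 else 0) + (if i = b then 1 else 0)) * m := by
  simp [EE]

lemma EE_last {N : ℕ} (a b : Fin N) (d : Fin N → ℕ) (m : ℕ) :
    EE a b d m (Fin.last N) = m := by
  simp [EE]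

lemma quad_link {N : ℕ} (C : Matrix (Fin N) (Fin N) ℤ) (hC : C.IsSymm)
    (a b : Fin N) (hab : a ≠ b)
    (C' : Matrix (Fin (N + 1)) (Fin (N + 1)) ℤ)
    (hC'ab : C' a.castSucc b.castSucc = C a b + 1)
    (hC'ba : C' b.castSucc a.castSucc = C a b + 1)
    (hC'nn : C' (Fin.last N) (Fin.last N) = C a a + 2 * C a b + C b b)
    (hC'in : ∀ i : Fin N, C' i.castSucc (Fin.last N) = C a i + C b i)
    (hC'ni : ∀ i : Fin N, C' (Fin.last N) i.castSucc = C a i + C b i)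
    (hC'ij : ∀ i j : Fin N, ¬(i = a ∧ j = b) → ¬(i = b ∧ j = a) →
      C' i.castSucc j.castSucc = C i j)
    (d : Fin N → ℕ) (m : ℕ) (hma : m ≤ d a) (hmb : m ≤ d b) :
    quadForm C' (EE a b d m)
      = quadForm C d + 2 * ((d a - m : ℕ) : ℤ) * ((d b - m : ℕ) : ℤ) := by
  have hCs : ∀ i j, C j i = C i j := fun i j => congrFun (congrFun hC i) j
  have hle : ∀ i : Fin N, ((if i = a then 1 else 0) + (if i = b then 1 else 0)) * m ≤ d i := by
    intro i
    by_cases hia : i = a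
    · subst hia; simp [fun h => hab h, hma]
    · by_cases hib : i = b
      · subst hib; simp [hia, hmb]
      · simp [hia, hib]
  have hcast : ∀ i : Fin N, ((EE a b d m i.castSucc : ℕ) : ℤ)
      = (d i : ℤ) - dD a b i * (m : ℤ) := by
    intro i
    rw [EE_castSucc, Nat.cast_sub (hle i), Nat.cast_mul, Nat.cast_add]
    simp [dD, apply_ite (fun n : ℕ => (n : ℤ))]
  have hsplit : ∀ i j : Fin N, C' i.castSucc j.castSucc
      = C i j + ((if i = a ∧ j = b then (1:ℤ) else 0) + (if i = b ∧ j = a then 1 else 0)) := by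
    intro i j
    by_cases h1 : i = a ∧ j = b
    · rw [h1.1, h1.2, hC'ab]
      simp [hab, hab.symm]
    · by_cases h2 : i = b ∧ j = a
      · rw [h2.1, h2.2, hC'ba, hCs b a]
        simp [hab, hab.symm]
      · rw [hC'ij i j h1 h2]
        simp [h1, h2]
  simp only [quadForm]
  rw [Fin.sum_univ_castSucc]
  simp only [Fin.sum_univ_castSucc, EE_last, hC'in, hC'ni, hC'nn, hsplit, hcast]
  rw [Finset.sum_add_distrib]
  rw [Finset.sum_congr rfl fun i (_ : i ∈ Finset.univ) => Finset.sum_congr rfl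
    fun j (_ : j ∈ Finset.univ) =>
    (show (C i j + ((if i = a ∧ j = b then (1:ℤ) else 0) + if i = b ∧ j = a then 1 else 0)) *
        ((d i : ℤ) - dD a b i * (m:ℤ)) * ((d j : ℤ) - dD a b j * (m:ℤ))
      = C i j * ((d i : ℤ) - dD a b i * (m:ℤ)) * ((d j : ℤ) - dD a b j * (m:ℤ))
        + ((if i = a ∧ j = b then (1:ℤ) else 0) * ((d i : ℤ) - dD a b i * (m:ℤ))
            * ((d j : ℤ) - dD a b j * (m:ℤ))
          + (if i = b ∧ j = a then (1:ℤ) else 0) * ((d i : ℤ) - dD a b i * (m:ℤ))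
            * ((d j : ℤ) - dD a b j * (m:ℤ))) by ring)]
  simp only [Finset.sum_add_distrib]
  rw [sum_pair' a b a b d (m:ℤ), sum_pair' a b b a d (m:ℤ), expand_CC' a b C hC d (m:ℤ)]
  have hl2 : ∑ x, (C a x + C b x) * (m:ℤ) * ((d x : ℤ) - dD a b x * (m:ℤ))
      = (∑ x, (C a x + C b x) * ((d x : ℤ) - dD a b x * (m:ℤ))) * (m:ℤ) := by
    rw [Finset.sum_mul]
    exact Finset.sum_congr rfl fun x _ => by ring
  have hl1 : ∑ x, (C a x + C b x) * ((d x : ℤ) - dD a b x * (m:ℤ)) * (m:ℤ)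
      = (∑ x, (C a x + C b x) * ((d x : ℤ) - dD a b x * (m:ℤ))) * (m:ℤ) := by
    rw [Finset.sum_mul]
  rw [hl1, hl2, expand_lin' a b C hC d (m:ℤ), dD_a a b hab, dD_b a b hab,
    Nat.cast_sub hma, Nat.cast_sub hmb]
  ring

lemma prod_split {N : ℕ} (a b : Fin N) (hab : a ≠ b) (g : Fin N → K) :
    ∏ i, g i = g a * (g b * ∏ i ∈ (Finset.univ.erase a).erase b, g i) := by
  rw [← Finset.mul_prod_erase Finset.univ g (Finset.mem_univ a),
    ← Finset.mul_prod_erase (Finset.univ.erase a) g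
      (Finset.mem_erase.mpr ⟨hab.symm, Finset.mem_univ b⟩)]

lemma prod_EE {N : ℕ} (a b : Fin N) (hab : a ≠ b) (d : Fin N → ℕ) (m : ℕ) :
    ∏ i, AA (EE a b d m i)
      = AA m * (AA (d a - m) *
          (AA (d b - m) * ∏ i ∈ (Finset.univ.erase a).erase b, AA (d i))) := by
  rw [Fin.prod_univ_castSucc, EE_last]
  rw [Finset.prod_congr rfl fun (i : Fin N) (_ : i ∈ Finset.univ) =>
    (congrArg AA (EE_castSucc a b d m i))]
  rw [prod_split a b hab (fun i => AA (d i - ((if i = a then 1 else 0) + (if i = b then 1 else 0)) * m))]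
  have h1 : d a - ((if a = a then 1 else 0) + (if a = b then 1 else 0)) * m = d a - m := by
    simp [hab]
  have h2 : d b - ((if b = a then 1 else 0) + (if b = b then 1 else 0)) * m = d b - m := by
    simp [hab.symm]
  rw [h1, h2]
  rw [Finset.prod_congr rfl fun i hi => ?_]
  · ring
  · obtain ⟨hib, hia, -⟩ : i ≠ b ∧ i ≠ a ∧ True := by
      simp only [Finset.mem_erase] at hi; exact ⟨hi.1, hi.2.1, trivial⟩
    simp [hia, hib]

lemma P0_ne {N : ℕ} (a b : Fin N) (d : Fin N → ℕ) :
    (∏ i ∈ (Finset.univ.erase a).erase b, AA (d i)) ≠ 0 :=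
  Finset.prod_ne_zero_iff.mpr fun i _ => AA_ne (d i)

lemma term_eq (r s m : ℕ) (hma : m ≤ r) (hmb : m ≤ s) (P0 : K) (hP0 : P0 ≠ 0) (c : K) :
    c * ((qq ^ 2) ^ ((r - m) * (s - m))) / (AA m * (AA (r - m) * (AA (s - m) * P0)))
      = (c / (AA r * (AA s * P0))) * Gt r s m := by
  unfold Gt qb
  rw [if_pos hma, if_pos hmb]
  have n1 := AA_ne r; have n2 := AA_ne s; have n3 := AA_ne m
  have n4 := AA_ne (r - m); have n5 := AA_ne (s - m)
  field_simp

lemma sum_side (c : K) (r s : ℕ) (P0 : K) (hP0 : P0 ≠ 0) :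
    ∑ m ∈ Finset.range (min r s + 1),
        c * ((qq ^ 2) ^ ((r - m) * (s - m))) / (AA m * (AA (r - m) * (AA (s - m) * P0)))
      = c / (AA r * (AA s * P0)) := by
  rw [Finset.sum_congr rfl fun m hm => term_eq r s m
      (by simp only [Finset.mem_range] at hm; omega)
      (by simp only [Finset.mem_range] at hm; omega) P0 hP0 c]
  rw [← Finset.mul_sum, key r s, mul_one]


/-- **Linking preserves the motivic generating series (Theorem 2.4, Ekholm–Kucharski–Longhi).**
Linking the nodes `a ≠ b` of `C` yields the quiver `C'` on `N+1` nodes described below,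
and `P_C(x_1,…,x_N) = P_{C'}(x_1,…,x_N,x_n)` after the substitution `x_n = x_a x_b`,
expressed coefficientwise. -/
theorem statement3 (N : ℕ) (C : Matrix (Fin N) (Fin N) ℤ) (hC : C.IsSymm)
    (a b : Fin N) (hab : a ≠ b)
    (C' : Matrix (Fin (N + 1)) (Fin (N + 1)) ℤ)
    (hC'ab : C' a.castSucc b.castSucc = C a b + 1)
    (hC'ba : C' b.castSucc a.castSucc = C a b + 1)
    (hC'nn : C' (Fin.last N) (Fin.last N) = C a a + 2 * C a b + C b b)
    (hC'in : ∀ i : Fin N, C' i.castSucc (Fin.last N) = C a i + C b i)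
    (hC'ni : ∀ i : Fin N, C' (Fin.last N) i.castSucc = C a i + C b i)
    (hC'ij : ∀ i j : Fin N, ¬(i = a ∧ j = b) → ¬(i = b ∧ j = a) →
      C' i.castSucc j.castSucc = C i j) :
    ∀ d : Fin N → ℕ,
      Pcoeff C d =
        ∑ᶠ e : Fin (N + 1) → ℕ,
          if ∀ i : Fin N,
              e i.castSucc + ((if i = a then 1 else 0) + (if i = b then 1 else 0)) *
                e (Fin.last N) = d i then
            (-qq) ^ quadForm C' e / ∏ i, qPoch (qq ^ 2) (e i)
          else 0 := by
  intro d
  have hq0 : (-qq) ≠ 0 := by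
    simp [qq, RatFunc.X_ne_zero]
  have hta : ((if a = a then 1 else 0) + (if a = b then 1 else 0)) = 1 := by simp [hab]
  have htb : ((if b = a then 1 else 0) + (if b = b then 1 else 0)) = 1 := by simp [hab.symm]
  have hle2 : ∀ (m : ℕ) (i : Fin N), m ≤ d a → m ≤ d b →
      ((if i = a then 1 else 0) + (if i = b then 1 else 0)) * m ≤ d i := by
    intro m i hma hmb
    by_cases hia : i = a
    · subst hia; rw [hta, one_mul]; exact hma
    · by_cases hib : i = b
      · subst hib; rw [htb, one_mul]; exact hmb
      · simp [hia, hib]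
  have hsupp : Function.support (fun e : Fin (N + 1) → ℕ =>
      if ∀ i : Fin N,
          e i.castSucc + ((if i = a then 1 else 0) + (if i = b then 1 else 0)) *
            e (Fin.last N) = d i then
        (-qq) ^ quadForm C' e / ∏ i, qPoch (qq ^ 2) (e i)
      else 0)
      ⊆ ↑((Finset.range (min (d a) (d b) + 1)).image (EE a b d)) := by
    intro e he
    rw [Function.mem_support] at he
    by_cases hc : ∀ i : Fin N,
        e i.castSucc + ((if i = a then 1 else 0) + (if i = b then 1 else 0)) *
          e (Fin.last N) = d i
    swap
    · rw [if_neg hc] at he; exact absurd rfl he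
    have ha' := hc a; have hb' := hc b
    rw [hta, one_mul] at ha'
    rw [htb, one_mul] at hb'
    have hee : e = EE a b d (e (Fin.last N)) := by
      funext j
      refine Fin.lastCases ?_ ?_ j
      · rw [EE_last]
      · intro i
        rw [EE_castSucc]
        have := hc i
        omega
    exact Finset.mem_coe.mpr (Finset.mem_image.mpr
      ⟨e (Fin.last N), Finset.mem_range.mpr (by omega), hee.symm⟩)
  rw [finsum_eq_sum_of_support_subset _ hsupp]
  rw [Finset.sum_image (fun m1 _ m2 _ h => by
    have := congrArg (fun g : Fin (N + 1) → ℕ => g (Fin.last N)) h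
    simpa [EE_last] using this)]
  have hterm : ∀ m ∈ Finset.range (min (d a) (d b) + 1),
      (if ∀ i : Fin N,
          (EE a b d m) i.castSucc + ((if i = a then 1 else 0) + (if i = b then 1 else 0)) *
            (EE a b d m) (Fin.last N) = d i then
        (-qq) ^ quadForm C' (EE a b d m) / ∏ i, qPoch (qq ^ 2) ((EE a b d m) i)
      else 0)
      = (-qq) ^ quadForm C d * ((qq ^ 2) ^ ((d a - m) * (d b - m)))
          / (AA m * (AA (d a - m) * (AA (d b - m) *
              ∏ i ∈ (Finset.univ.erase a).erase b, AA (d i)))) := by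
    intro m hm
    have hma : m ≤ d a := by simp only [Finset.mem_range] at hm; omega
    have hmb : m ≤ d b := by simp only [Finset.mem_range] at hm; omega
    have hcond : ∀ i : Fin N,
        (EE a b d m) i.castSucc + ((if i = a then 1 else 0) + (if i = b then 1 else 0)) *
          (EE a b d m) (Fin.last N) = d i := by
      intro i
      rw [EE_castSucc, EE_last]
      have := hle2 m i hma hmb
      omega
    rw [if_pos hcond]
    rw [quad_link C hC a b hab C' hC'ab hC'ba hC'nn hC'in hC'ni hC'ij d m hma hmb]
    rw [show (∏ i, qPoch (qq ^ 2) ((EE a b d m) i)) = ∏ i, AA ((EE a b d m) i) from rfl]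
    rw [prod_EE a b hab d m]
    rw [zpow_add₀ hq0]
    rw [show ((2:ℤ) * ((d a - m : ℕ) : ℤ) * ((d b - m : ℕ) : ℤ))
        = ((2 * ((d a - m) * (d b - m)) : ℕ) : ℤ) by push_cast; ring]
    rw [zpow_natCast, pow_mul, neg_sq]
  rw [Finset.sum_congr rfl hterm]
  rw [sum_side ((-qq) ^ quadForm C d) (d a) (d b) _ (P0_ne a b d)]
  rw [Pcoeff]
  rw [show (∏ i, qPoch (qq ^ 2) (d i)) = ∏ i, AA (d i) from rfl]
  rw [prod_split a b hab (fun i => AA (d i))]
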